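/- Let ρ : ℝ → (0,π) be a C¹ 2π-periodic function, let a, b ∈ ℝ, and define the spherical radial graph γ(θ) := (sin ρ(θ) cos θ, sin ρ(θ) sin θ, cos ρ(θ)) on the unit sphere S² ⊂ ℝ³. Suppose that for all θ, ρ'(θ) = (a cos θ + b sin θ) · √( sin²ρ(θ) + ρ'(θ)² ) (i.e. r_s = a cos θ + b sin θ along the curve). Then the image of γ is a geodesic circle: there exist p ∈ ℝ³ with |p| = 1 and R ∈ (0,π) such that ⟨p, γ(θ)⟩ = cos R for all θ. -/

import Mathlib

open Real Set

noncomputable section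

/-- A `C¹` spherical radial graph
`γ(θ) = (sin ρ(θ) cos θ, sin ρ(θ) sin θ, cos ρ(θ)) ⊂ S²` satisfying
`r_s = a cos θ + b sin θ`, i.e. `ρ' = (a cos θ + b sin θ) √(sin²ρ + ρ'²)`, is a geodesic
circle: `⟨p, γ(θ)⟩ = cos R` for some unit `p ∈ ℝ³` and some `R ∈ (0,π)`. -/
theorem spherical_radial_graph_is_circle
    (ρ : ℝ → ℝ) (hρC1 : ContDiff ℝ 1 ρ)
    (hρper : ∀ θ, ρ (θ + 2 * π) = ρ θ)
    (hρmem : ∀ θ, ρ θ ∈ Ioo 0 π)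
    (a b : ℝ)
    (hode : ∀ θ : ℝ,
      deriv ρ θ = (a * Real.cos θ + b * Real.sin θ) *
        Real.sqrt ((Real.sin (ρ θ)) ^ 2 + (deriv ρ θ) ^ 2)) :
    ∃ p₁ p₂ p₃ R : ℝ, p₁ ^ 2 + p₂ ^ 2 + p₃ ^ 2 = 1 ∧ R ∈ Ioo 0 π ∧
      ∀ θ : ℝ,
        p₁ * (Real.sin (ρ θ) * Real.cos θ) + p₂ * (Real.sin (ρ θ) * Real.sin θ) +
          p₃ * Real.cos (ρ θ) = Real.cos R := by
  have hρd : Differentiable ℝ ρ := hρC1.differentiable one_ne_zero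
  have hsinpos : ∀ θ, 0 < Real.sin (ρ θ) := fun θ =>
    Real.sin_pos_of_pos_of_lt_pi (hρmem θ).1 (hρmem θ).2
  set c : ℝ → ℝ := fun θ => a * Real.cos θ + b * Real.sin θ with hcdef
  set m : ℝ → ℝ := fun θ => a * Real.sin θ - b * Real.cos θ with hmdef
  have hcθ : ∀ θ, c θ = a * Real.cos θ + b * Real.sin θ := fun _ => rfl
  have hmθ : ∀ θ, m θ = a * Real.sin θ - b * Real.cos θ := fun _ => rfl
  have hmc : ∀ θ, m θ ^ 2 + c θ ^ 2 = a ^ 2 + b ^ 2 := by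
    intro θ
    rw [hcθ, hmθ]
    linear_combination (a ^ 2 + b ^ 2) * (Real.sin_sq_add_cos_sq θ)
  -- 1 - c² > 0 everywhere
  have hceq : ∀ θ, (a * Real.cos θ + b * Real.sin θ) = c θ := fun _ => rfl
  have heq : ∀ θ, deriv ρ θ ^ 2
      = c θ ^ 2 * (Real.sin (ρ θ) ^ 2 + deriv ρ θ ^ 2) := by
    intro θ
    have hnn : 0 ≤ Real.sin (ρ θ) ^ 2 + deriv ρ θ ^ 2 := by positivity
    have hS2 : Real.sqrt (Real.sin (ρ θ) ^ 2 + deriv ρ θ ^ 2) ^ 2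
        = Real.sin (ρ θ) ^ 2 + deriv ρ θ ^ 2 := Real.sq_sqrt hnn
    conv_lhs => rw [hode θ]
    rw [mul_pow, hS2, hceq]
  have hc2 : ∀ θ, (c θ) ^ 2 < 1 := by
    intro θ
    by_contra h
    push_neg at h
    have hsp : 0 < Real.sin (ρ θ) ^ 2 := pow_pos (hsinpos θ) 2
    nlinarith [heq θ, sq_nonneg (deriv ρ θ)]
  set s : ℝ → ℝ := fun θ => Real.sqrt (1 - (c θ) ^ 2) with hsdef
  have hsθ : ∀ θ, s θ = Real.sqrt (1 - (c θ) ^ 2) := fun _ => rfl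
  have hs2 : ∀ θ, s θ ^ 2 = 1 - c θ ^ 2 := fun θ =>
    Real.sq_sqrt (by nlinarith [hc2 θ])
  have hspos : ∀ θ, 0 < s θ := fun θ => Real.sqrt_pos.2 (by nlinarith [hc2 θ])
  -- a² + b² < 1
  have hk : a ^ 2 + b ^ 2 < 1 := by
    rcases eq_or_ne (a ^ 2 + b ^ 2) 0 with h0 | h0
    · rw [h0]; norm_num
    · have hz : (⟨a, b⟩ : ℂ) ≠ 0 := by
        intro h
        apply h0
        have ha : a = 0 := congrArg Complex.re h
        have hb : b = 0 := congrArg Complex.im h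
        rw [ha, hb]; ring
      have hKnn : (0:ℝ) ≤ a ^ 2 + b ^ 2 := by positivity
      have hKpos : 0 < a ^ 2 + b ^ 2 := lt_of_le_of_ne hKnn (Ne.symm h0)
      have hsqpos : 0 < Real.sqrt (a ^ 2 + b ^ 2) := Real.sqrt_pos.2 hKpos
      have habs : ‖(⟨a, b⟩ : ℂ)‖ = Real.sqrt (a ^ 2 + b ^ 2) := by
        rw [Complex.norm_def, Complex.normSq_mk]; ring_nf
      have hre : (⟨a, b⟩ : ℂ).re = a := rfl
      have him : (⟨a, b⟩ : ℂ).im = b := rfl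
      have hval : c (Complex.arg ⟨a, b⟩) = Real.sqrt (a ^ 2 + b ^ 2) := by
        rw [hcθ, Complex.cos_arg hz, Complex.sin_arg, habs, hre, him]
        rw [← mul_div_assoc, ← mul_div_assoc, ← add_div,
          div_eq_iff (ne_of_gt hsqpos), Real.mul_self_sqrt hKnn]
        ring
      have h1 := hc2 (Complex.arg ⟨a, b⟩)
      rw [hval, Real.sq_sqrt hKnn] at h1
      exact h1
  -- the resolved ODE: ρ' = c sin ρ / s
  have hρ' : ∀ θ, deriv ρ θ = c θ * Real.sin (ρ θ) / s θ := by
    intro θ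
    have h3 : (Real.sin (ρ θ) ^ 2 + deriv ρ θ ^ 2) * s θ ^ 2 = Real.sin (ρ θ) ^ 2 := by
      rw [hs2 θ]
      linear_combination heq θ
    have hsne : s θ ^ 2 ≠ 0 := pow_ne_zero 2 (ne_of_gt (hspos θ))
    have hSeq : Real.sqrt (Real.sin (ρ θ) ^ 2 + deriv ρ θ ^ 2)
        = Real.sin (ρ θ) / s θ := by
      rw [show Real.sin (ρ θ) ^ 2 + deriv ρ θ ^ 2 = (Real.sin (ρ θ) / s θ) ^ 2 by
        rw [div_pow, eq_div_iff hsne]; exact h3]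
      exact Real.sqrt_sq (le_of_lt (div_pos (hsinpos θ) (hspos θ)))
    rw [hode θ, hSeq, hceq]; ring
  have hρder : ∀ θ, HasDerivAt ρ (c θ * Real.sin (ρ θ) / s θ) θ := by
    intro θ
    have := (hρd θ).hasDerivAt
    rwa [hρ' θ] at this
  -- derivatives of m, c, s, d
  have hmd : ∀ θ, HasDerivAt m (c θ) θ := by
    intro θ
    have h := ((Real.hasDerivAt_sin θ).const_mul a).sub ((Real.hasDerivAt_cos θ).const_mul b)
    refine h.congr_deriv ?_
    rw [hcθ]; ring
  have hcd : ∀ θ, HasDerivAt c (-(m θ)) θ := by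
    intro θ
    have h := ((Real.hasDerivAt_cos θ).const_mul a).add ((Real.hasDerivAt_sin θ).const_mul b)
    refine h.congr_deriv ?_
    rw [hmθ]; ring
  have hsd : ∀ θ, HasDerivAt s (c θ * m θ / s θ) θ := by
    intro θ
    have hinner : HasDerivAt (fun t => 1 - (c t) ^ 2) (2 * c θ * m θ) θ := by
      have h := ((hcd θ).pow 2).const_sub 1
      refine h.congr_deriv ?_
      ring
    have hne : 1 - (c θ) ^ 2 ≠ 0 := by nlinarith [hc2 θ]
    have h := hinner.sqrt hne
    convert h using 1
    rw [show Real.sqrt (1 - c θ ^ 2) = s θ from (hsθ θ).symm]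
    have hsne : s θ ≠ 0 := ne_of_gt (hspos θ)
    field_simp
  set d : ℝ → ℝ := fun θ => m θ + s θ with hddef
  have hdθ : ∀ θ, d θ = m θ + s θ := fun _ => rfl
  have hdpos : ∀ θ, 0 < d θ := by
    intro θ
    have h1 : m θ ^ 2 < s θ ^ 2 := by
      rw [hs2 θ]; nlinarith [hmc θ, hk]
    have h2 := hspos θ
    rw [hdθ]
    nlinarith [sq_nonneg (m θ + s θ), sq_nonneg (m θ - s θ)]
  have hdd : ∀ θ, HasDerivAt d (c θ * d θ / s θ) θ := by
    intro θ
    have h := (hmd θ).add (hsd θ)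
    refine h.congr_deriv ?_
    rw [hdθ]
    have hsne : s θ ≠ 0 := ne_of_gt (hspos θ)
    field_simp
    ring
  -- r = tan(ρ/2)
  set r : ℝ → ℝ := fun θ => Real.tan (ρ θ / 2) with hrdef
  have hrθ : ∀ θ, r θ = Real.tan (ρ θ / 2) := fun _ => rfl
  have hhalf : ∀ θ, 0 < ρ θ / 2 ∧ ρ θ / 2 < π / 2 := fun θ =>
    ⟨by linarith [(hρmem θ).1], by linarith [(hρmem θ).2]⟩
  have hcoshalf : ∀ θ, 0 < Real.cos (ρ θ / 2) := fun θ =>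
    Real.cos_pos_of_mem_Ioo ⟨by linarith [(hhalf θ).1, Real.pi_pos], (hhalf θ).2⟩
  have hrpos : ∀ θ, 0 < r θ := fun θ =>
    Real.tan_pos_of_pos_of_lt_pi_div_two (hhalf θ).1 (hhalf θ).2
  have hsinhalf : ∀ θ, Real.sin (ρ θ)
      = 2 * Real.sin (ρ θ / 2) * Real.cos (ρ θ / 2) := by
    intro θ
    have h := Real.sin_two_mul (ρ θ / 2)
    rw [show 2 * (ρ θ / 2) = ρ θ by ring] at h
    exact h
  have hcoshalf2 : ∀ θ, Real.cos (ρ θ)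
      = 2 * Real.cos (ρ θ / 2) ^ 2 - 1 := by
    intro θ
    have h := Real.cos_two_mul (ρ θ / 2)
    rw [show 2 * (ρ θ / 2) = ρ θ by ring] at h
    exact h
  have hrd : ∀ θ, HasDerivAt r (c θ * r θ / s θ) θ := by
    intro θ
    have htan := Real.hasDerivAt_tan (ne_of_gt (hcoshalf θ))
    have hin : HasDerivAt (fun t => ρ t / 2) (c θ * Real.sin (ρ θ) / s θ / 2) θ :=
      (hρder θ).div_const 2
    have h := HasDerivAt.comp θ htan hin
    refine h.congr_deriv ?_
    rw [hrθ, Real.tan_eq_sin_div_cos, hsinhalf θ]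
    have hcne : Real.cos (ρ θ / 2) ≠ 0 := ne_of_gt (hcoshalf θ)
    have hsne : s θ ≠ 0 := ne_of_gt (hspos θ)
    field_simp
  -- the conserved quantity r / d
  have hgd : ∀ θ, HasDerivAt (fun t => r t / d t) 0 θ := by
    intro θ
    have h := (hrd θ).div (hdd θ) (ne_of_gt (hdpos θ))
    refine h.congr_deriv ?_
    have hsne : s θ ≠ 0 := ne_of_gt (hspos θ)
    have hdne : d θ ≠ 0 := ne_of_gt (hdpos θ)
    field_simp
    ring
  have hgconst : ∀ θ, r θ / d θ = r 0 / d 0 := fun θ =>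
    is_const_of_deriv_eq_zero (fun x => (hgd x).differentiableAt)
      (fun x => (hgd x).deriv) θ 0
  obtain ⟨C, hCdef⟩ : ∃ C : ℝ, C = r 0 / d 0 := ⟨_, rfl⟩
  have hCpos : 0 < C := hCdef ▸ div_pos (hrpos 0) (hdpos 0)
  have hrC : ∀ θ, r θ = C * d θ := by
    intro θ
    have h := hgconst θ
    rw [← hCdef] at h
    have hdne : d θ ≠ 0 := ne_of_gt (hdpos θ)
    field_simp at h
    linarith [h]
  -- the circle equation in stereographic coordinates
  have hcirc : ∀ θ, r θ ^ 2 = 2 * C * m θ * r θ + C ^ 2 * (1 - (a ^ 2 + b ^ 2)) := by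
    intro θ
    rw [hrC θ, hdθ]
    linear_combination C ^ 2 * hs2 θ - C ^ 2 * hmc θ
  -- set up the plane
  obtain ⟨q, hqdef⟩ : ∃ q : ℝ, q = C ^ 2 * (1 - (a ^ 2 + b ^ 2)) := ⟨_, rfl⟩
  have hqpos : 0 < q := by
    rw [hqdef]
    nlinarith [pow_pos hCpos 2, hk]
  obtain ⟨N, hNdef⟩ : ∃ N : ℝ,
      N = Real.sqrt (4 * C ^ 2 * (a ^ 2 + b ^ 2) + (1 + q) ^ 2) := ⟨_, rfl⟩
  have hNarg : 0 < 4 * C ^ 2 * (a ^ 2 + b ^ 2) + (1 + q) ^ 2 := by positivity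
  have hNpos : 0 < N := hNdef ▸ Real.sqrt_pos.2 hNarg
  have hN2 : N ^ 2 = 4 * C ^ 2 * (a ^ 2 + b ^ 2) + (1 + q) ^ 2 :=
    hNdef ▸ Real.sq_sqrt (le_of_lt hNarg)
  have hNne : N ≠ 0 := ne_of_gt hNpos
  -- key pointwise identity
  have key : ∀ θ, 2 * C * b * (Real.sin (ρ θ) * Real.cos θ)
      - 2 * C * a * (Real.sin (ρ θ) * Real.sin θ)
      - (1 + q) * Real.cos (ρ θ) = q - 1 := by
    intro θ
    have hcne : Real.cos (ρ θ / 2) ≠ 0 := ne_of_gt (hcoshalf θ)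
    have hpyth := Real.sin_sq_add_cos_sq (ρ θ / 2)
    have hr2 : 1 + r θ ^ 2 = 1 / Real.cos (ρ θ / 2) ^ 2 := by
      rw [hrθ, Real.tan_eq_sin_div_cos]
      field_simp
      linear_combination hpyth
    have h1 : Real.sin (ρ θ) * (1 + r θ ^ 2) = 2 * r θ := by
      rw [hsinhalf θ, hr2, hrθ, Real.tan_eq_sin_div_cos]
      field_simp
    have h2 : Real.cos (ρ θ) * (1 + r θ ^ 2) = 1 - r θ ^ 2 := by
      rw [hcoshalf2 θ, hr2, hrθ, Real.tan_eq_sin_div_cos]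
      field_simp
      linear_combination hpyth
    have h1pr : (0:ℝ) < 1 + r θ ^ 2 := by positivity
    have hfin : (2 * C * b * (Real.sin (ρ θ) * Real.cos θ)
        - 2 * C * a * (Real.sin (ρ θ) * Real.sin θ)
        - (1 + q) * Real.cos (ρ θ)) * (1 + r θ ^ 2) = (q - 1) * (1 + r θ ^ 2) := by
      have hc := hcirc θ
      rw [hmθ] at hc
      rw [hqdef]
      linear_combination (2 * C * b * Real.cos θ - 2 * C * a * Real.sin θ) * h1
        - (1 + C ^ 2 * (1 - (a ^ 2 + b ^ 2))) * h2 + 2 * hc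
    exact mul_right_cancel₀ (ne_of_gt h1pr) hfin
  -- bounds for cos R
  have hsqlt : (q - 1) ^ 2 < N ^ 2 := by
    rw [hN2, hqdef]
    nlinarith [pow_pos hCpos 2]
  have hlow : -1 < (q - 1) / N := by
    rw [lt_div_iff₀ hNpos]
    nlinarith [sq_nonneg (q - 1 + N), hNpos]
  have hhigh : (q - 1) / N < 1 := by
    rw [div_lt_iff₀ hNpos]
    nlinarith [sq_nonneg (q - 1 - N), hNpos]
  refine ⟨2 * C * b / N, -(2 * C * a) / N, -(1 + q) / N,
    Real.arccos ((q - 1) / N), ?_, ⟨?_, ?_⟩, ?_⟩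
  · have hnn : (2 * C * b) ^ 2 + (-(2 * C * a)) ^ 2 + (-(1 + q)) ^ 2 = N ^ 2 := by
      rw [hN2]; ring
    rw [div_pow, div_pow, div_pow, ← add_div, ← add_div, hnn,
      div_self (pow_ne_zero 2 hNne)]
  · exact Real.arccos_pos.2 hhigh
  · rcases lt_or_eq_of_le (Real.arccos_le_pi ((q - 1) / N)) with h | h
    · exact h
    · exfalso
      have := Real.arccos_eq_pi.1 h
      linarith
  · intro θ
    rw [Real.cos_arccos (le_of_lt hlow) (le_of_lt hhigh)]
    have hkey := key θ
    field_simp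
    linear_combination hkey
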